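/- Let G be a graph with m ≥ 1 edges, 𝒜 = {{u}, A₁, …, A_k} a partition of V(G) with u a singleton part, and for each i let ℬᵢ be the partition obtained from 𝒜 by merging {u} into Aᵢ. Then q_{ℬᵢ}(G) − q_𝒜(G) = (1/m)·e({u},Aᵢ) − (1/(2m²))·d_u·vol(Aᵢ), where e({u},Aᵢ) is the number of edges from u to Aᵢ and d_u is the degree of u. -/
import Mathlib


open Finset
open scoped Classical

noncomputable section

variable {V : Type*} [Fintype V]

/-- Number of edges of `G` with both endpoints in `A`. -/
def edgesIn (G : SimpleGraph V) (A : Finset V) : ℕ :=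
  (G.edgeFinset.filter (fun e => ∀ v ∈ e, v ∈ A)).card

/-- Sum of degrees (in `G`) of the vertices of `A`. -/
def vol (G : SimpleGraph V) (A : Finset V) : ℕ :=
  ∑ v ∈ A, G.degree v

/-- Number of edges of `G` with exactly one endpoint in `A`. -/
def bdry (G : SimpleGraph V) (A : Finset V) : ℕ :=
  (G.edgeFinset.filter (fun e => (∃ v ∈ e, v ∈ A) ∧ (∃ v ∈ e, v ∉ A))).card

/-- The modularity score of a vertex partition. -/
def modScore (G : SimpleGraph V) (P : Finpartition (univ : Finset V)) : ℝ :=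
  (∑ A ∈ P.parts, (edgesIn G A : ℝ)) / (G.edgeFinset.card : ℝ)
    - (∑ A ∈ P.parts, (vol G A : ℝ) ^ 2) / (4 * (G.edgeFinset.card : ℝ) ^ 2)

/-- The maximum modularity of `G`. -/
def maxMod (G : SimpleGraph V) : ℝ :=
  sSup {x : ℝ | ∃ P : Finpartition (univ : Finset V), modScore G P = x}

lemma edgesIn_singleton (G : SimpleGraph V) (u : V) : edgesIn G {u} = 0 := by
  rw [edgesIn, Finset.card_eq_zero, Finset.filter_eq_empty_iff]
  intro e he
  rw [SimpleGraph.mem_edgeFinset] at he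
  induction e using Sym2.ind with
  | _ a b =>
    simp only [Sym2.mem_iff, Finset.mem_singleton]
    intro h
    have ha := h a (Or.inl rfl)
    have hb := h b (Or.inr rfl)
    exact G.ne_of_adj he (ha.trans hb.symm)

lemma card_incident (G : SimpleGraph V) (u : V) (A : Finset V) (hu : u ∉ A) :
    (A.filter (G.Adj u)).card
      = (G.edgeFinset.filter (fun e => u ∈ e ∧ ∀ v ∈ e, v ∈ insert u A)).card := by
  apply Finset.card_bij (fun v _ => s(u, v))
  · intro v hv
    rw [Finset.mem_filter] at hv ⊢
    refine ⟨SimpleGraph.mem_edgeFinset.mpr hv.2, Sym2.mem_mk_left _ _, ?_⟩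
    intro w hw
    rcases Sym2.mem_iff.mp hw with h | h
    · exact h ▸ Finset.mem_insert_self _ _
    · exact h ▸ Finset.mem_insert_of_mem hv.1
  · intro v hv v' hv' h
    exact Sym2.congr_right.mp h
  · intro e he
    rw [Finset.mem_filter] at he
    obtain ⟨he1, hue, hall⟩ := he
    rw [SimpleGraph.mem_edgeFinset] at he1
    induction e using Sym2.ind with
    | _ a b =>
      have hadj : G.Adj a b := he1
      rcases Sym2.mem_iff.mp hue with h | h
      · subst h
        have hb : b ∈ A := by
          rcases Finset.mem_insert.mp (hall b (Sym2.mem_mk_right _ _)) with h | h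
          · exact absurd (h ▸ hadj) (G.irrefl)
          · exact h
        exact ⟨b, Finset.mem_filter.mpr ⟨hb, hadj⟩, rfl⟩
      · subst h
        have ha : a ∈ A := by
          rcases Finset.mem_insert.mp (hall a (Sym2.mem_mk_left _ _)) with h | h
          · exact absurd (h ▸ hadj) (fun hh => G.irrefl hh)
          · exact h
        exact ⟨a, Finset.mem_filter.mpr ⟨ha, hadj.symm⟩, Sym2.eq_swap⟩

lemma edgesIn_insert (G : SimpleGraph V) (u : V) (A : Finset V) (hu : u ∉ A) :
    edgesIn G (insert u A) = edgesIn G A + (A.filter (G.Adj u)).card := by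
  unfold edgesIn
  have hsplit : G.edgeFinset.filter (fun e => ∀ v ∈ e, v ∈ insert u A)
      = (G.edgeFinset.filter (fun e => ∀ v ∈ e, v ∈ A)) ∪
        (G.edgeFinset.filter (fun e => u ∈ e ∧ ∀ v ∈ e, v ∈ insert u A)) := by
    ext e
    simp only [Finset.mem_filter, Finset.mem_union]
    constructor
    · rintro ⟨he, hall⟩
      by_cases hue : u ∈ e
      · exact Or.inr ⟨he, hue, hall⟩
      · refine Or.inl ⟨he, fun v hv => ?_⟩
        rcases Finset.mem_insert.mp (hall v hv) with h | h
        · exact absurd (h ▸ hv) hue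
        · exact h
    · rintro (⟨he, hall⟩ | ⟨he, _, hall⟩)
      · exact ⟨he, fun v hv => Finset.mem_insert_of_mem (hall v hv)⟩
      · exact ⟨he, hall⟩
  rw [hsplit, Finset.card_union_of_disjoint, card_incident G u A hu]
  rw [Finset.disjoint_left]
  rintro e he1 he2
  rw [Finset.mem_filter] at he1 he2
  exact hu (he1.2 u he2.2.1)

/-- Merging a singleton part `{u}` into a part `A` changes the modularity by
`(1/m)·e({u},A) - (1/(2m²))·d_u·vol(A)`. -/
theorem merge_singleton_modularity (G : SimpleGraph V) (hm : 1 ≤ G.edgeFinset.card)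
    (u : V) (A : Finset V) (P Q : Finpartition (univ : Finset V))
    (hu : {u} ∈ P.parts) (hA : A ∈ P.parts) (hne : A ≠ {u})
    (hQ : Q.parts = insert (insert u A) ((P.parts.erase {u}).erase A)) :
    modScore G Q - modScore G P =
      (1 / (G.edgeFinset.card : ℝ)) * ((A.filter (G.Adj u)).card : ℝ) -
        (1 / (2 * (G.edgeFinset.card : ℝ) ^ 2)) * (G.degree u : ℝ) * (vol G A : ℝ) := by
  have huA : u ∉ A := by
    intro h
    exact hne (P.eq_of_mem_parts hA hu h (Finset.mem_singleton_self u))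
  set S := (P.parts.erase {u}).erase A with hS
  have hSsub : S ⊆ P.parts := (Finset.erase_subset _ _).trans (Finset.erase_subset _ _)
  have hins : insert u A ∉ S := by
    intro h
    have hmem := hSsub h
    have := P.eq_of_mem_parts hmem hu (Finset.mem_insert_self u A)
      (Finset.mem_singleton_self u)
    have hAe : A = ∅ := by
      apply Finset.eq_empty_of_forall_notMem
      intro x hx
      have hx' : x ∈ ({u} : Finset V) := this ▸ Finset.mem_insert_of_mem hx
      exact huA (Finset.mem_singleton.mp hx' ▸ hx)
    exact (P.nonempty_of_mem_parts hA).ne_empty hAe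
  have hA' : A ∈ P.parts.erase {u} := Finset.mem_erase.mpr ⟨hne, hA⟩
  have hsumP : ∀ f : Finset V → ℝ,
      ∑ B ∈ P.parts, f B = f {u} + (f A + ∑ B ∈ S, f B) := by
    intro f
    rw [← Finset.add_sum_erase _ f hu, ← Finset.add_sum_erase _ f hA']
  have hsumQ : ∀ f : Finset V → ℝ,
      ∑ B ∈ Q.parts, f B = f (insert u A) + ∑ B ∈ S, f B := by
    intro f
    rw [hQ, Finset.sum_insert hins]
  have hvol : vol G (insert u A) = G.degree u + vol G A := by
    rw [vol, Finset.sum_insert huA]; rfl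
  have hvolu : vol G {u} = G.degree u := by
    rw [vol, Finset.sum_singleton]
  have hm0 : (G.edgeFinset.card : ℝ) ≠ 0 := by
    exact Nat.cast_ne_zero.mpr (by omega)
  rw [modScore, modScore, hsumP, hsumP, hsumQ, hsumQ, edgesIn_insert G u A huA,
    hvol, hvolu, edgesIn_singleton G u]
  push_cast
  field_simp
  ring

end
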